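/- (BEC-bound for H_α^A.) Fix α > 0, α ≠ 1, and suppose that for every fixed y ∈ I_α^A the map x ↦ κ_α^A(x,y) is convex on I_α^A, and likewise in the second argument for every fixed first argument. Write K_i = K_α^A(X_i|Y_i) and δ = δ_α^A = 2^{(1-α)/α}. Then: if α > 1, H_α^A(X_1+X_2|Y_1Y_2) ≥ (α/(1-α))·log( (δ − K_1)(δ − K_2)/(1 − δ) + δ ); and if α < 1, H_α^A(X_1+X_2|Y_1Y_2) ≤ (α/(1-α))·log( (δ − K_1)(δ − K_2)/(1 − δ) + δ ). If instead κ_α^A is concave in each argument, the two inequalities hold with ≤ and ≥ exchanged. -/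

import Mathlib

open Real

noncomputable section

/-- Binary convolution `a∗b = a(1-b) + (1-a)b`. -/
def bconv (a b : ℝ) : ℝ := a * (1 - b) + (1 - a) * b

/-- Binary Rényi entropy `h_α(p) = (1/(1-α))·log(p^α + (1-p)^α)`. -/
def binH (α p : ℝ) : ℝ := (1 / (1 - α)) * Real.log (p ^ α + (1 - p) ^ α)

/-- Inverse of `h_α` as a map `[0, log 2] → [0, 1/2]`. -/
def binHInv (α : ℝ) : ℝ → ℝ := Function.invFunOn (binH α) (Set.Icc 0 (1/2))

/-- `k_α^A(p) = (p^α + (1-p)^α)^{1/α}`. -/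
def kA (α p : ℝ) : ℝ := (p ^ α + (1 - p) ^ α) ^ (1/α)

/-- Inverse of `k_α^A`, mapping `I_α^A` back to `[0,1/2]`. -/
def kAInv (α : ℝ) : ℝ → ℝ := Function.invFunOn (kA α) (Set.Icc 0 (1/2))

/-- `δ_α^A = 2^{(1-α)/α}`. -/
def deltaA (α : ℝ) : ℝ := (2 : ℝ) ^ ((1 - α)/α)

/-- The closed interval `I_α^A` with endpoints `1` and `δ_α^A`. -/
def IA (α : ℝ) : Set ℝ := Set.uIcc 1 (deltaA α)

/-- `κ_α^A(x,y) = k_α^A((k_α^A)⁻¹(x) ∗ (k_α^A)⁻¹(y))`. -/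
def kkA (α x y : ℝ) : ℝ := kA α (bconv (kAInv α x) (kAInv α y))

/-- `k_α^H(p) = p^α + (1-p)^α`. -/
def kH (α p : ℝ) : ℝ := p ^ α + (1 - p) ^ α

/-- Inverse of `k_α^H`, mapping `I_α^H` back to `[0,1/2]`. -/
def kHInv (α : ℝ) : ℝ → ℝ := Function.invFunOn (kH α) (Set.Icc 0 (1/2))

/-- `δ_α^H = 2^{1-α}`. -/
def deltaH (α : ℝ) : ℝ := (2 : ℝ) ^ (1 - α)

/-- The closed interval `I_α^H` with endpoints `1` and `δ_α^H`. -/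
def IH (α : ℝ) : Set ℝ := Set.uIcc 1 (deltaH α)

/-- `κ_α^H(x,y) = k_α^H((k_α^H)⁻¹(x) ∗ (k_α^H)⁻¹(y))`. -/
def kkH (α x y : ℝ) : ℝ := kH α (bconv (kHInv α x) (kHInv α y))

/-- `ĥ_α(x,y) = h_α(h_α⁻¹(x) ∗ h_α⁻¹(y))`. -/
def hhat (α x y : ℝ) : ℝ := binH α (bconv (binHInv α x) (binHInv α y))

/-- Marginal on `Y` of a joint pmf. -/
def margY {X Y : Type*} [Fintype X] (p : X → Y → ℝ) (y : Y) : ℝ := ∑ x, p x y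

/-- A joint pmf: nonnegative entries summing to one. -/
def IsPmf {X Y : Type*} [Fintype X] [Fintype Y] (p : X → Y → ℝ) : Prop :=
  (∀ x y, 0 ≤ p x y) ∧ ∑ x, ∑ y, p x y = 1

/-- Arimoto conditional Rényi entropy `H_α^A(X|Y)`. -/
def condA (α : ℝ) {X Y : Type*} [Fintype X] [Fintype Y] (p : X → Y → ℝ) : ℝ :=
  (α / (1 - α)) * Real.log (∑ y, margY p y * (∑ x, (p x y / margY p y) ^ α) ^ (1/α))

/-- Hayashi conditional Rényi entropy `H_α^H(X|Y)`. -/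
def condH (α : ℝ) {X Y : Type*} [Fintype X] [Fintype Y] (p : X → Y → ℝ) : ℝ :=
  (1 / (1 - α)) * Real.log (∑ y, ∑ x, margY p y * (p x y / margY p y) ^ α)

/-- Jizba–Arimitsu conditional Rényi entropy `H_α^J(X|Y)`. -/
def condJ (α : ℝ) {X Y : Type*} [Fintype X] [Fintype Y] (p : X → Y → ℝ) : ℝ :=
  (1 / (1 - α)) * (Real.log (∑ x, ∑ y, p x y ^ α) - Real.log (∑ y, margY p y ^ α))

/-- Cachin conditional Rényi entropy `H_α^C(X|Y)`. -/
def condC (α : ℝ) {X Y : Type*} [Fintype X] [Fintype Y] (p : X → Y → ℝ) : ℝ :=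
  (1 / (1 - α)) * ∑ y, margY p y * Real.log (∑ x, (p x y / margY p y) ^ α)

/-- `K_α^A(X|Y) = exp(((1-α)/α)·H_α^A(X|Y))`. -/
def KA (α : ℝ) {X Y : Type*} [Fintype X] [Fintype Y] (p : X → Y → ℝ) : ℝ :=
  Real.exp (((1 - α)/α) * condA α p)

/-- `K_α^H(X|Y) = exp((1-α)·H_α^H(X|Y))`. -/
def KH (α : ℝ) {X Y : Type*} [Fintype X] [Fintype Y] (p : X → Y → ℝ) : ℝ :=
  Real.exp ((1 - α) * condH α p)

/-- `K_α^J(X|Y) = exp((1-α)·H_α^J(X|Y))`. -/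
def KJ (α : ℝ) {X Y : Type*} [Fintype X] [Fintype Y] (p : X → Y → ℝ) : ℝ :=
  Real.exp ((1 - α) * condJ α p)

/-- Joint pmf of `(X₁+X₂, (Y₁,Y₂))` for independent pairs `(X₁,Y₁)`, `(X₂,Y₂)`. -/
def combine {Y1 Y2 : Type*} (p1 : Bool → Y1 → ℝ) (p2 : Bool → Y2 → ℝ) :
    Bool → Y1 × Y2 → ℝ :=
  fun z y => ∑ x : Bool, p1 x y.1 * p2 (Bool.xor x z) y.2

/-- `k_∞^A(p) = max{p, 1-p}`. -/
def kInf (p : ℝ) : ℝ := max p (1 - p)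

/-- Binary min-entropy `h_∞(p) = -log max{p, 1-p}`. -/
def binHInf (p : ℝ) : ℝ := - Real.log (max p (1 - p))

/-- Inverse of the restriction of `h_∞` to `[0,1/2]`. -/
def binHInfInv : ℝ → ℝ := Function.invFunOn binHInf (Set.Icc 0 (1/2))

/-- Conditional min-entropy `H_∞(X|Y)` for binary `X`. -/
def condInf {Y : Type*} [Fintype Y] (p : Bool → Y → ℝ) : ℝ :=
  - Real.log (∑ y, margY p y * max (p false y / margY p y) (p true y / margY p y))

/-- Unconditional Rényi entropy of a finitely supported distribution. -/
def renyiEnt (α : ℝ) {X : Type*} [Fintype X] (p : X → ℝ) : ℝ :=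
  (1 / (1 - α)) * Real.log (∑ x, p x ^ α)

/-- Distribution of the mod-2 sum of two independent binary random variables. -/
def sumDist (p1 p2 : Bool → ℝ) : Bool → ℝ := fun z => ∑ x : Bool, p1 x * p2 (Bool.xor x z)

section MGLaux

open Set Finset

variable {α : ℝ}

private lemma deltaA_pos (α : ℝ) : 0 < deltaA α := Real.rpow_pos_of_pos two_pos _

private lemma one_lt_deltaA (hα : 0 < α) (h : α < 1) : 1 < deltaA α :=
  (Real.one_lt_rpow_iff_of_pos two_pos).2 (Or.inl ⟨one_lt_two, div_pos (by linarith) hα⟩)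

private lemma deltaA_lt_one (h : 1 < α) : deltaA α < 1 :=
  Real.rpow_lt_one_of_one_lt_of_neg one_lt_two
    (div_neg_of_neg_of_pos (by linarith) (by linarith))

private lemma kA_one_sub (α p : ℝ) : kA α (1 - p) = kA α p := by
  unfold kA; rw [sub_sub_cancel, add_comm]

private lemma kA_zero (hα : 0 < α) : kA α 0 = 1 := by
  unfold kA
  rw [Real.zero_rpow hα.ne', sub_zero, Real.one_rpow, zero_add, Real.one_rpow]

private lemma kA_half (hα : 0 < α) : kA α (1/2) = deltaA α := by
  unfold kA deltaA
  have h1 : (1:ℝ) - 1/2 = 1/2 := by norm_num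
  have h2 : ((1:ℝ)/2) ^ α = 2 ^ (-α) := by
    rw [Real.rpow_neg (by norm_num), ← Real.inv_rpow (by norm_num)]; norm_num
  have h3 : (2:ℝ) ^ (-α) + 2 ^ (-α) = 2 ^ (1 - α) := by
    rw [← two_mul, show (1:ℝ) - α = 1 + -α by ring, Real.rpow_add two_pos, Real.rpow_one]
  rw [h1, h2, h3, ← Real.rpow_mul (by norm_num : (0:ℝ) ≤ 2)]
  norm_num [div_eq_mul_inv, one_div]

private lemma kA_pos (hα : 0 < α) {p : ℝ} (h0 : 0 ≤ p) (h1 : p ≤ 1) : 0 < kA α p := by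
  unfold kA
  apply Real.rpow_pos_of_pos
  rcases eq_or_lt_of_le h0 with h | h
  · rw [← h, Real.zero_rpow hα.ne', sub_zero, Real.one_rpow]; norm_num
  · exact add_pos_of_pos_of_nonneg (Real.rpow_pos_of_pos h _)
      (Real.rpow_nonneg (by linarith) _)

private lemma kA_min (α p : ℝ) : kA α (min p (1 - p)) = kA α p := by
  rcases min_choice p (1 - p) with h | h <;> rw [h]
  exact kA_one_sub α p

private lemma kHcont (hα : 0 < α) :
    ContinuousOn (fun p : ℝ => p ^ α + (1 - p) ^ α) (Icc (0:ℝ) (1/2)) := by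
  apply ContinuousOn.add
  · exact continuousOn_id.rpow_const fun x _ => Or.inr hα.le
  · exact (continuousOn_const.sub continuousOn_id).rpow_const fun x hx => Or.inr hα.le

private lemma kHderiv (hα : 0 < α) {x : ℝ} (hx : x ∈ Set.Ioo (0:ℝ) (1/2)) :
    HasDerivAt (fun p : ℝ => p ^ α + (1 - p) ^ α)
      (α * x ^ (α - 1) - α * (1 - x) ^ (α - 1)) x := by
  obtain ⟨hx0, hx1⟩ := hx
  have h1 : HasDerivAt (fun p : ℝ => p ^ α) (α * x ^ (α - 1)) x :=
    Real.hasDerivAt_rpow_const (Or.inl hx0.ne')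
  have h3 : HasDerivAt (fun p : ℝ => 1 - p) (-1) x := (hasDerivAt_id x).const_sub 1
  have h2 : HasDerivAt (fun p : ℝ => (1 - p) ^ α) (α * (1 - x) ^ (α - 1) * (-1)) x :=
    (Real.hasDerivAt_rpow_const (Or.inl (by linarith : (1:ℝ) - x ≠ 0))).comp x h3
  have := h1.add h2
  exact this.congr_deriv (by ring)

private lemma kA_strictMonoOn (hα : 0 < α) (h1 : α < 1) :
    StrictMonoOn (kA α) (Icc (0:ℝ) (1/2)) := by
  have hkH : StrictMonoOn (fun p : ℝ => p ^ α + (1 - p) ^ α) (Icc (0:ℝ) (1/2)) := by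
    apply strictMonoOn_of_deriv_pos (convex_Icc _ _) (kHcont hα)
    intro x hx
    rw [interior_Icc] at hx
    rw [(kHderiv hα hx).deriv]
    have hlt : (1 - x) ^ (α - 1) < x ^ (α - 1) :=
      Real.rpow_lt_rpow_of_neg hx.1 (by linarith [hx.2]) (by linarith)
    nlinarith
  intro x hx y hy hxy
  unfold kA
  have hpos : 0 < x ^ α + (1 - x) ^ α := by
    rcases eq_or_lt_of_le hx.1 with h | h
    · rw [← h, Real.zero_rpow hα.ne', sub_zero, Real.one_rpow]; norm_num
    · exact add_pos_of_pos_of_nonneg (Real.rpow_pos_of_pos h _)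
        (Real.rpow_nonneg (by linarith [hx.2] : (0:ℝ) ≤ 1 - x) _)
  exact Real.rpow_lt_rpow hpos.le (hkH hx hy hxy) (by positivity)

private lemma kA_strictAntiOn (h1 : 1 < α) :
    StrictAntiOn (kA α) (Icc (0:ℝ) (1/2)) := by
  have hα : 0 < α := by linarith
  have hkH : StrictAntiOn (fun p : ℝ => p ^ α + (1 - p) ^ α) (Icc (0:ℝ) (1/2)) := by
    apply strictAntiOn_of_deriv_neg (convex_Icc _ _) (kHcont hα)
    intro x hx
    rw [interior_Icc] at hx
    rw [(kHderiv hα hx).deriv]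
    have hlt : x ^ (α - 1) < (1 - x) ^ (α - 1) :=
      Real.rpow_lt_rpow hx.1.le (by linarith [hx.2]) (by linarith)
    nlinarith
  intro x hx y hy hxy
  unfold kA
  have hpos : 0 < y ^ α + (1 - y) ^ α := by
    rcases eq_or_lt_of_le hy.1 with h | h
    · rw [← h, Real.zero_rpow hα.ne', sub_zero, Real.one_rpow]; norm_num
    · exact add_pos_of_pos_of_nonneg (Real.rpow_pos_of_pos h _)
        (Real.rpow_nonneg (by linarith [hy.2] : (0:ℝ) ≤ 1 - y) _)
  exact Real.rpow_lt_rpow hpos.le (hkH hx hy hxy) (by positivity)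

private lemma kA_injOn (hα : 0 < α) (hα1 : α ≠ 1) :
    Set.InjOn (kA α) (Icc (0:ℝ) (1/2)) := by
  rcases lt_or_gt_of_ne hα1 with h | h
  · exact (kA_strictMonoOn hα h).injOn
  · exact (kA_strictAntiOn h).injOn

private lemma kAInv_kA (hα : 0 < α) (hα1 : α ≠ 1) {p : ℝ}
    (hp : p ∈ Icc (0:ℝ) (1/2)) : kAInv α (kA α p) = p :=
  (kA_injOn hα hα1).leftInvOn_invFunOn hp

private lemma kA_mem_IA (hα : 0 < α) (hα1 : α ≠ 1) {p : ℝ}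
    (hp : p ∈ Icc (0:ℝ) (1/2)) : kA α p ∈ IA α := by
  have h0 : (0:ℝ) ∈ Icc (0:ℝ) (1/2) := by norm_num
  have hh : (1/2:ℝ) ∈ Icc (0:ℝ) (1/2) := by norm_num
  unfold IA
  rcases lt_or_gt_of_ne hα1 with h | h
  · rw [Set.uIcc_of_le (one_lt_deltaA hα h).le]
    constructor
    · rw [← kA_zero hα]
      exact (kA_strictMonoOn hα h).monotoneOn h0 hp hp.1
    · rw [← kA_half hα]
      exact (kA_strictMonoOn hα h).monotoneOn hp hh hp.2
  · rw [Set.uIcc_of_ge (deltaA_lt_one h).le]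
    constructor
    · rw [← kA_half hα]
      exact (kA_strictAntiOn h).antitoneOn hp hh hp.2
    · rw [← kA_zero hα]
      exact (kA_strictAntiOn h).antitoneOn h0 hp hp.1

end MGLaux
section MGLchord

open Set Finset

variable {α : ℝ}

private lemma coeff_mem (hα : 0 < α) (hα1 : α ≠ 1) {x : ℝ} (hx : x ∈ IA α) :
    0 ≤ (x - deltaA α) / (1 - deltaA α) ∧ (x - deltaA α) / (1 - deltaA α) ≤ 1 := by
  rcases lt_or_gt_of_ne hα1 with h | h
  · have hδ : 1 < deltaA α := one_lt_deltaA hα h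
    have hne : 1 - deltaA α ≠ 0 := by linarith
    have hx' : x ∈ Icc (1:ℝ) (deltaA α) := by rwa [IA, Set.uIcc_of_le hδ.le] at hx
    have ht : (x - deltaA α) / (1 - deltaA α) * (1 - deltaA α) = x - deltaA α :=
      div_mul_cancel₀ _ hne
    obtain ⟨hx1, hx2⟩ := hx'
    constructor <;> nlinarith [ht]
  · have hδ : deltaA α < 1 := deltaA_lt_one h
    have hne : 1 - deltaA α ≠ 0 := by linarith
    have hx' : x ∈ Icc (deltaA α) 1 := by rwa [IA, Set.uIcc_of_ge hδ.le] at hx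
    have ht : (x - deltaA α) / (1 - deltaA α) * (1 - deltaA α) = x - deltaA α :=
      div_mul_cancel₀ _ hne
    obtain ⟨hx1, hx2⟩ := hx'
    constructor <;> nlinarith [ht]

private lemma deltaA_ne_one (hα : 0 < α) (hα1 : α ≠ 1) : (1:ℝ) - deltaA α ≠ 0 := by
  rcases lt_or_gt_of_ne hα1 with h | h
  · have := one_lt_deltaA hα h; linarith
  · have := deltaA_lt_one h; linarith

private lemma kAInv_one (hα : 0 < α) (hα1 : α ≠ 1) : kAInv α 1 = 0 := by
  rw [← kA_zero hα]
  exact kAInv_kA hα hα1 (by norm_num)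

private lemma kAInv_deltaA (hα : 0 < α) (hα1 : α ≠ 1) : kAInv α (deltaA α) = 1/2 := by
  rw [← kA_half hα]
  exact kAInv_kA hα hα1 (by norm_num)

private lemma kkA_one (hα : 0 < α) (hα1 : α ≠ 1) {b : ℝ}
    (hb : b ∈ Icc (0:ℝ) (1/2)) : kkA α 1 (kA α b) = kA α b := by
  rw [kkA, kAInv_one hα hα1, kAInv_kA hα hα1 hb,
    show bconv 0 b = b by unfold bconv; ring]

private lemma kkA_delta (hα : 0 < α) (hα1 : α ≠ 1) {b : ℝ}
    (hb : b ∈ Icc (0:ℝ) (1/2)) : kkA α (deltaA α) (kA α b) = deltaA α := by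
  rw [kkA, kAInv_deltaA hα hα1, kAInv_kA hα hα1 hb,
    show bconv (1/2) b = 1/2 by unfold bconv; ring, kA_half hα]

private lemma kkA_ab (hα : 0 < α) (hα1 : α ≠ 1) {a b : ℝ}
    (ha : a ∈ Icc (0:ℝ) (1/2)) (hb : b ∈ Icc (0:ℝ) (1/2)) :
    kkA α (kA α a) (kA α b) = kA α (bconv a b) := by
  rw [kkA, kAInv_kA hα hα1 ha, kAInv_kA hα hα1 hb]

private lemma chord_le (hα : 0 < α) (hα1 : α ≠ 1)
    (hcv : ∀ y ∈ IA α, ConvexOn ℝ (IA α) fun x => kkA α x y)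
    {a b : ℝ} (ha : a ∈ Icc (0:ℝ) (1/2)) (hb : b ∈ Icc (0:ℝ) (1/2)) :
    kA α (bconv a b) ≤
      deltaA α + (kA α a - deltaA α) * (kA α b - deltaA α) / (1 - deltaA α) := by
  have hx : kA α a ∈ IA α := kA_mem_IA hα hα1 ha
  have hy : kA α b ∈ IA α := kA_mem_IA hα hα1 hb
  obtain ⟨ht0, ht1⟩ := coeff_mem hα hα1 hx
  set δ := deltaA α
  set x := kA α a
  set y := kA α b
  set t := (x - δ) / (1 - δ) with htdef
  have hne : 1 - δ ≠ 0 := deltaA_ne_one hα hα1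
  have htm : t * (1 - δ) = x - δ := div_mul_cancel₀ _ hne
  have htb : (0:ℝ) ≤ 1 - t := by linarith
  have hab : t + (1 - t) = 1 := by ring
  have h1 : (1:ℝ) ∈ IA α := Set.left_mem_uIcc
  have h2 : δ ∈ IA α := Set.right_mem_uIcc
  have key := (hcv y hy).2 h1 h2 ht0 htb hab
  simp only [smul_eq_mul] at key
  have hcomb : t * 1 + (1 - t) * δ = x := by linear_combination htm
  rw [hcomb, kkA_one hα hα1 hb, kkA_delta hα hα1 hb, kkA_ab hα hα1 ha hb] at key
  have hfin : t * y + (1 - t) * δ = δ + (x - δ) * (y - δ) / (1 - δ) := by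
    have h4 : t * (y - δ) = (x - δ) * (y - δ) / (1 - δ) := by
      rw [htdef, div_mul_eq_mul_div]
    linear_combination h4
  linarith [key, hfin.le, hfin.ge]

private lemma chord_ge (hα : 0 < α) (hα1 : α ≠ 1)
    (hcv : ∀ y ∈ IA α, ConcaveOn ℝ (IA α) fun x => kkA α x y)
    {a b : ℝ} (ha : a ∈ Icc (0:ℝ) (1/2)) (hb : b ∈ Icc (0:ℝ) (1/2)) :
    deltaA α + (kA α a - deltaA α) * (kA α b - deltaA α) / (1 - deltaA α) ≤
      kA α (bconv a b) := by
  have hx : kA α a ∈ IA α := kA_mem_IA hα hα1 ha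
  have hy : kA α b ∈ IA α := kA_mem_IA hα hα1 hb
  obtain ⟨ht0, ht1⟩ := coeff_mem hα hα1 hx
  set δ := deltaA α
  set x := kA α a
  set y := kA α b
  set t := (x - δ) / (1 - δ) with htdef
  have hne : 1 - δ ≠ 0 := deltaA_ne_one hα hα1
  have htm : t * (1 - δ) = x - δ := div_mul_cancel₀ _ hne
  have htb : (0:ℝ) ≤ 1 - t := by linarith
  have hab : t + (1 - t) = 1 := by ring
  have h1 : (1:ℝ) ∈ IA α := Set.left_mem_uIcc
  have h2 : δ ∈ IA α := Set.right_mem_uIcc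
  have key := (hcv y hy).2 h1 h2 ht0 htb hab
  simp only [smul_eq_mul] at key
  have hcomb : t * 1 + (1 - t) * δ = x := by linear_combination htm
  rw [hcomb, kkA_one hα hα1 hb, kkA_delta hα hα1 hb, kkA_ab hα hα1 ha hb] at key
  have hfin : t * y + (1 - t) * δ = δ + (x - δ) * (y - δ) / (1 - δ) := by
    have h4 : t * (y - δ) = (x - δ) * (y - δ) / (1 - δ) := by
      rw [htdef, div_mul_eq_mul_div]
    linear_combination h4
  linarith [key, hfin.le, hfin.ge]

end MGLchord
section MGLpmf

open Set Finset

variable {α : ℝ} {Y : Type*} [Fintype Y]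

private def mAux {Y : Type*} [Fintype Y] (p : Bool → Y → ℝ) (y : Y) : ℝ :=
  min (p true y / margY p y) (1 - p true y / margY p y)

private def gAux (α : ℝ) {Y : Type*} [Fintype Y] (p : Bool → Y → ℝ) (y : Y) : ℝ :=
  kA α (mAux p y)

private lemma margY_eq (p : Bool → Y → ℝ) (y : Y) :
    margY p y = p true y + p false y := by
  simp [margY, Fintype.sum_bool]

private lemma margY_nonneg {p : Bool → Y → ℝ} (hnn : ∀ x y, 0 ≤ p x y) (y : Y) :
    0 ≤ margY p y :=
  Finset.sum_nonneg fun x _ => hnn x y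

private lemma margY_total {p : Bool → Y → ℝ} (hp : IsPmf p) :
    ∑ y, margY p y = 1 := by
  rw [show ∑ y, margY p y = ∑ y, ∑ x, p x y from rfl, Finset.sum_comm]
  exact hp.2

private lemma mAux_mem {p : Bool → Y → ℝ} (hnn : ∀ x y, 0 ≤ p x y) (y : Y) :
    mAux p y ∈ Icc (0:ℝ) (1/2) := by
  unfold mAux
  rcases eq_or_lt_of_le (margY_nonneg hnn y) with hq | hq
  · rw [← hq, div_zero]
    norm_num
  · have ha0 : 0 ≤ p true y / margY p y := div_nonneg (hnn true y) hq.le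
    have ha1 : p true y / margY p y ≤ 1 := by
      rw [div_le_one hq, margY_eq]
      linarith [hnn false y]
    constructor
    · exact le_min ha0 (by linarith)
    · rcases le_total (p true y / margY p y) (1/2) with h | h
      · exact le_trans (min_le_left _ _) h
      · exact le_trans (min_le_right _ _) (by linarith)

private lemma gAux_mem_IA (hα : 0 < α) (hα1 : α ≠ 1) {p : Bool → Y → ℝ}
    (hnn : ∀ x y, 0 ≤ p x y) (y : Y) : gAux α p y ∈ IA α :=
  kA_mem_IA hα hα1 (mAux_mem hnn y)

private lemma gAux_pos (hα : 0 < α) {p : Bool → Y → ℝ}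
    (hnn : ∀ x y, 0 ≤ p x y) (y : Y) : 0 < gAux α p y := by
  obtain ⟨h0, h1⟩ := mAux_mem hnn y
  exact kA_pos hα h0 (by linarith)

private lemma term_eq (hα : 0 < α) {p : Bool → Y → ℝ}
    (hnn : ∀ x y, 0 ≤ p x y) (y : Y) :
    margY p y * (∑ x, (p x y / margY p y) ^ α) ^ (1/α) =
      margY p y * gAux α p y := by
  rcases eq_or_lt_of_le (margY_nonneg hnn y) with hq | hq
  · rw [← hq, zero_mul, zero_mul]
  · congr 1
    have hfalse : p false y / margY p y = 1 - p true y / margY p y := by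
      rw [eq_sub_iff_add_eq, ← add_div, margY_eq, add_comm]
      exact div_self (by linarith [margY_eq p y, hq] : p true y + p false y ≠ 0)
    rw [Fintype.sum_bool, hfalse]
    rw [gAux, mAux, kA_min α]
    rfl

private lemma sum_gAux_pos (hα : 0 < α) {p : Bool → Y → ℝ} (hp : IsPmf p) :
    0 < ∑ y, margY p y * gAux α p y := by
  have hex : ∃ y ∈ Finset.univ (α := Y), (0:ℝ) < margY p y := by
    by_contra hcon
    push_neg at hcon
    have : ∑ y, margY p y ≤ 0 := Finset.sum_nonpos fun y hy => hcon y hy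
    rw [margY_total hp] at this; linarith
  obtain ⟨y0, _, hy0⟩ := hex
  apply Finset.sum_pos' (fun y _ => mul_nonneg (margY_nonneg hp.1 y) (gAux_pos hα hp.1 y).le)
  exact ⟨y0, Finset.mem_univ y0, mul_pos hy0 (gAux_pos hα hp.1 y0)⟩

private lemma condA_eq (hα : 0 < α) {p : Bool → Y → ℝ} (hp : IsPmf p) :
    condA α p = (α / (1 - α)) * Real.log (∑ y, margY p y * gAux α p y) := by
  unfold condA
  congr 2
  exact Finset.sum_congr rfl fun y _ => term_eq hα hp.1 y

private lemma KA_eq (hα : 0 < α) (hα1 : α ≠ 1) {p : Bool → Y → ℝ} (hp : IsPmf p) :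
    KA α p = ∑ y, margY p y * gAux α p y := by
  rw [KA, condA_eq hα hp, ← mul_assoc]
  have hne : (1:ℝ) - α ≠ 0 := sub_ne_zero.2 (Ne.symm hα1)
  have h1 : (1 - α) / α * (α / (1 - α)) = 1 := by
    field_simp
  rw [h1, one_mul, Real.exp_log (sum_gAux_pos hα hp)]

private lemma KA_mem_IA (hα : 0 < α) (hα1 : α ≠ 1) {p : Bool → Y → ℝ} (hp : IsPmf p) :
    KA α p ∈ Icc (min 1 (deltaA α)) (max 1 (deltaA α)) := by
  rw [KA_eq hα hα1 hp]
  have hIA : ∀ y : Y, gAux α p y ∈ Icc (min 1 (deltaA α)) (max 1 (deltaA α)) :=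
    fun y => gAux_mem_IA hα hα1 hp.1 y
  constructor
  · calc min 1 (deltaA α) = (∑ y, margY p y) * min 1 (deltaA α) := by
          rw [margY_total hp, one_mul]
    _ = ∑ y, margY p y * min 1 (deltaA α) := by rw [Finset.sum_mul]
    _ ≤ ∑ y, margY p y * gAux α p y :=
        Finset.sum_le_sum fun y _ =>
          mul_le_mul_of_nonneg_left (hIA y).1 (margY_nonneg hp.1 y)
  · calc ∑ y, margY p y * gAux α p y
        ≤ ∑ y, margY p y * max 1 (deltaA α) :=
        Finset.sum_le_sum fun y _ =>
          mul_le_mul_of_nonneg_left (hIA y).2 (margY_nonneg hp.1 y)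
    _ = (∑ y, margY p y) * max 1 (deltaA α) := by rw [Finset.sum_mul]
    _ = max 1 (deltaA α) := by rw [margY_total hp, one_mul]

end MGLpmf
section MGLcomb

open Set Finset

variable {α : ℝ} {Y1 Y2 : Type*} [Fintype Y1] [Fintype Y2]

private lemma IsPmf_combine {p1 : Bool → Y1 → ℝ} {p2 : Bool → Y2 → ℝ}
    (hp1 : IsPmf p1) (hp2 : IsPmf p2) : IsPmf (combine p1 p2) := by
  constructor
  · intro z y
    exact Finset.sum_nonneg fun x _ => mul_nonneg (hp1.1 x y.1) (hp2.1 (Bool.xor x z) y.2)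
  · have h1 := hp1.2
    have h2 := hp2.2
    rw [Fintype.sum_bool] at h1 h2
    have key : ∀ (a b : Bool), ∑ y1, ∑ y2, p1 a y1 * p2 b y2 =
        (∑ y1, p1 a y1) * (∑ y2, p2 b y2) := fun a b => (Finset.sum_mul_sum _ _ _ _).symm
    simp only [combine, Fintype.sum_prod_type, Fintype.sum_bool, Bool.xor,
      Finset.sum_add_distrib, key]
    simp only [show (true != true) = false from rfl, show (true != false) = true from rfl,
      show (false != true) = true from rfl, show (false != false) = false from rfl]
    nlinarith [h1, h2]

private lemma margY_combine (p1 : Bool → Y1 → ℝ) (p2 : Bool → Y2 → ℝ) (y1 : Y1) (y2 : Y2) :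
    margY (combine p1 p2) (y1, y2) = margY p1 y1 * margY p2 y2 := by
  simp only [margY, combine, Fintype.sum_bool, Bool.xor]
  simp only [show (true != true) = false from rfl, show (true != false) = true from rfl,
    show (false != true) = true from rfl, show (false != false) = false from rfl]
  ring

private lemma combine_true (p1 : Bool → Y1 → ℝ) (p2 : Bool → Y2 → ℝ) (y1 : Y1) (y2 : Y2) :
    combine p1 p2 true (y1, y2) =
      p1 true y1 * p2 false y2 + p1 false y1 * p2 true y2 := by
  simp only [combine, Fintype.sum_bool, Bool.xor]
  simp only [show (true != true) = false from rfl, show (true != false) = true from rfl,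
    show (false != true) = true from rfl, show (false != false) = false from rfl]

private lemma kA_bconv_min (α a b : ℝ) :
    kA α (bconv (min a (1 - a)) (min b (1 - b))) = kA α (bconv a b) := by
  rcases min_choice a (1 - a) with h | h <;> rcases min_choice b (1 - b) with h' | h' <;>
    rw [h, h'] <;>
    first
      | rfl
      | rw [show bconv a (1-b) = 1 - bconv a b by unfold bconv; ring, kA_one_sub]
      | rw [show bconv (1-a) b = 1 - bconv a b by unfold bconv; ring, kA_one_sub]
      | rw [show bconv (1-a) (1-b) = bconv a b by unfold bconv; ring]

private lemma gAux_combine (hα : 0 < α) (hα1 : α ≠ 1)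
    {p1 : Bool → Y1 → ℝ} {p2 : Bool → Y2 → ℝ} (hp1 : IsPmf p1) (hp2 : IsPmf p2)
    (y1 : Y1) (y2 : Y2) (hq1 : 0 < margY p1 y1) (hq2 : 0 < margY p2 y2) :
    gAux α (combine p1 p2) (y1, y2) = kA α (bconv (mAux p1 y1) (mAux p2 y2)) := by
  have e1 : p1 false y1 = margY p1 y1 - p1 true y1 := by rw [margY_eq]; ring
  have e2 : p2 false y2 = margY p2 y2 - p2 true y2 := by rw [margY_eq]; ring
  have hc : combine p1 p2 true (y1, y2) / margY (combine p1 p2) (y1, y2) =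
      bconv (p1 true y1 / margY p1 y1) (p2 true y2 / margY p2 y2) := by
    rw [margY_combine, combine_true, bconv, e1, e2]
    field_simp
  rw [gAux, mAux, hc, kA_min]
  exact (kA_bconv_min α _ _).symm

end MGLcomb
section MGLmaster

open Set Finset

variable {α : ℝ} {Y1 Y2 : Type*} [Fintype Y1] [Fintype Y2]

private lemma comb_term_le (hα : 0 < α) (hα1 : α ≠ 1)
    (hcv : ∀ y ∈ IA α, ConvexOn ℝ (IA α) fun x => kkA α x y)
    {p1 : Bool → Y1 → ℝ} {p2 : Bool → Y2 → ℝ} (hp1 : IsPmf p1) (hp2 : IsPmf p2)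
    (y1 : Y1) (y2 : Y2) :
    margY (combine p1 p2) (y1, y2) * gAux α (combine p1 p2) (y1, y2) ≤
      margY p1 y1 * margY p2 y2 *
        (deltaA α + (gAux α p1 y1 - deltaA α) * (gAux α p2 y2 - deltaA α) / (1 - deltaA α)) := by
  rw [margY_combine]
  rcases eq_or_lt_of_le (margY_nonneg hp1.1 y1) with hq1 | hq1
  · rw [← hq1]; simp
  rcases eq_or_lt_of_le (margY_nonneg hp2.1 y2) with hq2 | hq2
  · rw [← hq2]; simp
  apply mul_le_mul_of_nonneg_left _ (mul_nonneg hq1.le hq2.le)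
  rw [gAux_combine hα hα1 hp1 hp2 y1 y2 hq1 hq2]
  exact chord_le hα hα1 hcv (mAux_mem hp1.1 y1) (mAux_mem hp2.1 y2)

private lemma comb_term_ge (hα : 0 < α) (hα1 : α ≠ 1)
    (hcv : ∀ y ∈ IA α, ConcaveOn ℝ (IA α) fun x => kkA α x y)
    {p1 : Bool → Y1 → ℝ} {p2 : Bool → Y2 → ℝ} (hp1 : IsPmf p1) (hp2 : IsPmf p2)
    (y1 : Y1) (y2 : Y2) :
    margY p1 y1 * margY p2 y2 *
        (deltaA α + (gAux α p1 y1 - deltaA α) * (gAux α p2 y2 - deltaA α) / (1 - deltaA α)) ≤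
      margY (combine p1 p2) (y1, y2) * gAux α (combine p1 p2) (y1, y2) := by
  rw [margY_combine]
  rcases eq_or_lt_of_le (margY_nonneg hp1.1 y1) with hq1 | hq1
  · rw [← hq1]; simp
  rcases eq_or_lt_of_le (margY_nonneg hp2.1 y2) with hq2 | hq2
  · rw [← hq2]; simp
  apply mul_le_mul_of_nonneg_left _ (mul_nonneg hq1.le hq2.le)
  rw [gAux_combine hα hα1 hp1 hp2 y1 y2 hq1 hq2]
  exact chord_ge hα hα1 hcv (mAux_mem hp1.1 y1) (mAux_mem hp2.1 y2)

private lemma sum_expand {p1 : Bool → Y1 → ℝ} {p2 : Bool → Y2 → ℝ}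
    (hp1 : IsPmf p1) (hp2 : IsPmf p2) (δ : ℝ) :
    ∑ y1, ∑ y2, margY p1 y1 * margY p2 y2 *
        (δ + (gAux α p1 y1 - δ) * (gAux α p2 y2 - δ) / (1 - δ)) =
      (δ - ∑ y1, margY p1 y1 * gAux α p1 y1) *
        (δ - ∑ y2, margY p2 y2 * gAux α p2 y2) / (1 - δ) + δ := by
  have key : ∀ (y1 : Y1) (y2 : Y2), margY p1 y1 * margY p2 y2 *
      (δ + (gAux α p1 y1 - δ) * (gAux α p2 y2 - δ) / (1 - δ)) =
      δ * (margY p1 y1 * margY p2 y2) +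
        (margY p1 y1 * (gAux α p1 y1 - δ)) * (margY p2 y2 * (gAux α p2 y2 - δ)) / (1 - δ) := by
    intro y1 y2; ring
  simp_rw [key, Finset.sum_add_distrib, ← Finset.mul_sum, ← Finset.sum_div,
    ← Finset.sum_mul_sum]
  rw [← Finset.sum_mul, margY_total hp1, margY_total hp2]
  have e1 : ∑ y1, margY p1 y1 * (gAux α p1 y1 - δ) =
      (∑ y1, margY p1 y1 * gAux α p1 y1) - δ := by
    simp_rw [mul_sub, Finset.sum_sub_distrib, ← Finset.sum_mul, margY_total hp1, one_mul]
  have e2 : ∑ y2, margY p2 y2 * (gAux α p2 y2 - δ) =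
      (∑ y2, margY p2 y2 * gAux α p2 y2) - δ := by
    simp_rw [mul_sub, Finset.sum_sub_distrib, ← Finset.sum_mul, margY_total hp2, one_mul]
  rw [e1, e2]
  ring

private lemma master_le (hα : 0 < α) (hα1 : α ≠ 1)
    {p1 : Bool → Y1 → ℝ} {p2 : Bool → Y2 → ℝ} (hp1 : IsPmf p1) (hp2 : IsPmf p2)
    (hcv : ∀ y ∈ IA α, ConvexOn ℝ (IA α) fun x => kkA α x y) :
    KA α (combine p1 p2) ≤
      (deltaA α - KA α p1) * (deltaA α - KA α p2) / (1 - deltaA α) + deltaA α := by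
  have hpc : IsPmf (combine p1 p2) := IsPmf_combine hp1 hp2
  rw [KA_eq hα hα1 hpc, KA_eq hα hα1 hp1, KA_eq hα hα1 hp2, ← sum_expand hp1 hp2,
    Fintype.sum_prod_type]
  exact Finset.sum_le_sum fun y1 _ => Finset.sum_le_sum fun y2 _ =>
    comb_term_le hα hα1 hcv hp1 hp2 y1 y2

private lemma master_ge (hα : 0 < α) (hα1 : α ≠ 1)
    {p1 : Bool → Y1 → ℝ} {p2 : Bool → Y2 → ℝ} (hp1 : IsPmf p1) (hp2 : IsPmf p2)
    (hcv : ∀ y ∈ IA α, ConcaveOn ℝ (IA α) fun x => kkA α x y) :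
    (deltaA α - KA α p1) * (deltaA α - KA α p2) / (1 - deltaA α) + deltaA α ≤
      KA α (combine p1 p2) := by
  have hpc : IsPmf (combine p1 p2) := IsPmf_combine hp1 hp2
  rw [KA_eq hα hα1 hpc, KA_eq hα hα1 hp1, KA_eq hα hα1 hp2, ← sum_expand hp1 hp2,
    Fintype.sum_prod_type]
  exact Finset.sum_le_sum fun y1 _ => Finset.sum_le_sum fun y2 _ =>
    comb_term_ge hα hα1 hcv hp1 hp2 y1 y2

private lemma T_pos (hα : 0 < α) (hα1 : α ≠ 1)
    {Y : Type*} [Fintype Y] {p1 : Bool → Y1 → ℝ} {p2 : Bool → Y2 → ℝ}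
    (hp1 : IsPmf p1) (hp2 : IsPmf p2) :
    0 < (deltaA α - KA α p1) * (deltaA α - KA α p2) / (1 - deltaA α) + deltaA α := by
  have hδ : 0 < deltaA α := deltaA_pos α
  obtain ⟨hK1lo, hK1hi⟩ := KA_mem_IA hα hα1 hp1
  obtain ⟨hK2lo, hK2hi⟩ := KA_mem_IA hα hα1 hp2
  have hK1IA : KA α p1 ∈ IA α := by
    rw [IA, Set.uIcc]
    exact ⟨hK1lo, hK1hi⟩
  have hK2pos : 0 < KA α p2 := lt_of_lt_of_le (lt_min one_pos hδ) hK2lo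
  obtain ⟨ht0, ht1⟩ := coeff_mem hα hα1 hK1IA
  have hne : 1 - deltaA α ≠ 0 := deltaA_ne_one hα hα1
  have h4 : (deltaA α - KA α p1) * (deltaA α - KA α p2) / (1 - deltaA α) =
      (KA α p1 - deltaA α) / (1 - deltaA α) * (KA α p2 - deltaA α) := by
    rw [div_mul_eq_mul_div]
    ring_nf
  rw [h4]
  set t := (KA α p1 - deltaA α) / (1 - deltaA α)
  rcases eq_or_lt_of_le ht0 with h | h
  · rw [← h]
    simpa using hδ
  · nlinarith [mul_pos h hK2pos, mul_nonneg hδ.le (sub_nonneg.2 ht1)]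

end MGLmaster
/-- BEC-bound for the Arimoto conditional Rényi entropy. -/
theorem stmt_2 (α : ℝ) (hα : 0 < α) (hα1 : α ≠ 1)
    {Y1 Y2 : Type*} [Fintype Y1] [Fintype Y2]
    (p1 : Bool → Y1 → ℝ) (p2 : Bool → Y2 → ℝ)
    (hp1 : IsPmf p1) (hp2 : IsPmf p2) :
    (((∀ y ∈ IA α, ConvexOn ℝ (IA α) (fun x => kkA α x y)) ∧
      (∀ x ∈ IA α, ConvexOn ℝ (IA α) (fun y => kkA α x y))) →
      (1 < α → (α / (1 - α)) * Real.log
          ((deltaA α - KA α p1) * (deltaA α - KA α p2) / (1 - deltaA α) + deltaA α) ≤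
          condA α (combine p1 p2)) ∧
      (α < 1 → condA α (combine p1 p2) ≤ (α / (1 - α)) * Real.log
          ((deltaA α - KA α p1) * (deltaA α - KA α p2) / (1 - deltaA α) + deltaA α))) ∧
    (((∀ y ∈ IA α, ConcaveOn ℝ (IA α) (fun x => kkA α x y)) ∧
      (∀ x ∈ IA α, ConcaveOn ℝ (IA α) (fun y => kkA α x y))) →
      (1 < α → condA α (combine p1 p2) ≤ (α / (1 - α)) * Real.log
          ((deltaA α - KA α p1) * (deltaA α - KA α p2) / (1 - deltaA α) + deltaA α)) ∧
      (α < 1 → (α / (1 - α)) * Real.log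
          ((deltaA α - KA α p1) * (deltaA α - KA α p2) / (1 - deltaA α) + deltaA α) ≤
          condA α (combine p1 p2))) := by
  have hpc : IsPmf (combine p1 p2) := IsPmf_combine hp1 hp2
  have hKc_pos : 0 < KA α (combine p1 p2) := by
    rw [KA_eq hα hα1 hpc]
    exact sum_gAux_pos hα hpc
  have hcond : condA α (combine p1 p2) =
      (α / (1 - α)) * Real.log (KA α (combine p1 p2)) := by
    rw [condA_eq hα hpc, KA_eq hα hα1 hpc]
  have hT_pos : 0 < (deltaA α - KA α p1) * (deltaA α - KA α p2) / (1 - deltaA α) +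
      deltaA α := T_pos (Y := Y1) hα hα1 hp1 hp2
  constructor
  · rintro ⟨hcv, -⟩
    have hmain := master_le hα hα1 hp1 hp2 hcv
    have hlog : Real.log (KA α (combine p1 p2)) ≤
        Real.log ((deltaA α - KA α p1) * (deltaA α - KA α p2) / (1 - deltaA α) +
          deltaA α) := Real.log_le_log hKc_pos hmain
    constructor
    · intro h1
      rw [hcond]
      exact mul_le_mul_of_nonpos_left hlog
        (div_nonpos_of_nonneg_of_nonpos hα.le (by linarith : (1:ℝ) - α ≤ 0))
    · intro h1
      rw [hcond]
      exact mul_le_mul_of_nonneg_left hlog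
        (div_nonneg hα.le (by linarith : (0:ℝ) ≤ 1 - α))
  · rintro ⟨hcv, -⟩
    have hmain := master_ge hα hα1 hp1 hp2 hcv
    have hlog : Real.log ((deltaA α - KA α p1) * (deltaA α - KA α p2) / (1 - deltaA α) +
        deltaA α) ≤ Real.log (KA α (combine p1 p2)) := Real.log_le_log hT_pos hmain
    constructor
    · intro h1
      rw [hcond]
      exact mul_le_mul_of_nonpos_left hlog
        (div_nonpos_of_nonneg_of_nonpos hα.le (by linarith : (1:ℝ) - α ≤ 0))
    · intro h1
      rw [hcond]
      exact mul_le_mul_of_nonneg_left hlog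
        (div_nonneg hα.le (by linarith : (0:ℝ) ≤ 1 - α))
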